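/- If Alice plays a follow-Bob strategy on a pizza with an odd number of pieces (she picks an arbitrary first piece p and thereafter always picks the piece just revealed by Bob's previous move), then at the end of the game there is a cut C with p ∈ R(C) such that Alice has eaten exactly the pieces of R(C) and Bob exactly the pieces of G(C). -/

import Mathlib

/-!
Pizza game model.  Pieces are indexed by `ZMod n`.  A play is determined by
Alice's starting piece `p` and a sequence of direction choices
`d : ℕ → Bool`: the choice `d t` determines the piece eaten at move `t+1`
(`true` = clockwise end of the eaten interval, `false` = counterclockwise).
Moves are numbered `0, …, n-1`; Alice moves at even indices, Bob at odd ones,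
so the choice `d t` is made by Bob when `t` is even and by Alice when `t` is odd.
A strategy is a function from the list of previous direction choices to a choice.
-/

/-- The history of direction choices after `t` choices, when Alice plays `σ`
and Bob plays `τ`. -/
def hist (σ τ : List Bool → Bool) : ℕ → List Bool
  | 0 => []
  | t + 1 => hist σ τ t ++ [if Even t then τ (hist σ τ t) else σ (hist σ τ t)]

/-- The direction chosen at step `t` (determining the piece eaten at move `t+1`,
which belongs to Alice iff `t` is odd): Bob chooses it if `t` is even,
Alice if `t` is odd. -/
def choice (σ τ : List Bool → Bool) (t : ℕ) : Bool :=
  if Even t then τ (hist σ τ t) else σ (hist σ τ t)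

/-- The piece eaten at move `t`, given starting piece `p` and direction
choices `d`. -/
def piece (n : ℕ) (p : ZMod n) (d : ℕ → Bool) : ℕ → ZMod n
  | 0 => p
  | t + 1 =>
      if d t then
        p + ((((Finset.range (t + 1)).filter fun i => d i = true).card : ℕ) : ZMod n)
      else
        p - ((((Finset.range (t + 1)).filter fun i => d i = false).card : ℕ) : ZMod n)

/-- Alice's outcome: total size of the pieces eaten at even-numbered moves. -/
noncomputable def aliceOutcome (n : ℕ) [NeZero n] (s : ZMod n → ℝ) (p : ZMod n)
    (σ τ : List Bool → Bool) : ℝ :=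
  ∑ t ∈ Finset.range n, if Even t then s (piece n p (choice σ τ) t) else 0

/-- Bob's outcome: total size of the pieces eaten at odd-numbered moves. -/
noncomputable def bobOutcome (n : ℕ) [NeZero n] (s : ZMod n → ℝ) (p : ZMod n)
    (σ τ : List Bool → Bool) : ℝ :=
  ∑ t ∈ Finset.range n, if Even t then 0 else s (piece n p (choice σ τ) t)

/-- The follow-Bob strategy: Alice always repeats Bob's previous direction
choice, i.e. she picks the piece just revealed by Bob. -/
def followBob : List Bool → Bool := fun L => L.getLastD true

namespace Stmt7Aux

def Tc (d : ℕ → Bool) (t : ℕ) : ℕ := ((Finset.range t).filter fun i => d i = true).card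
def Fc (d : ℕ → Bool) (t : ℕ) : ℕ := ((Finset.range t).filter fun i => d i = false).card

lemma Tc_succ (d : ℕ → Bool) (t : ℕ) :
    Tc d (t+1) = Tc d t + if d t then 1 else 0 := by
  unfold Tc
  rw [Finset.range_add_one, Finset.filter_insert]
  cases h : d t <;> simp [Finset.card_insert_of_notMem]

lemma Fc_succ (d : ℕ → Bool) (t : ℕ) :
    Fc d (t+1) = Fc d t + if d t then 0 else 1 := by
  unfold Fc
  rw [Finset.range_add_one, Finset.filter_insert]
  cases h : d t <;> simp [Finset.card_insert_of_notMem]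

lemma Tc_add_Fc (d : ℕ → Bool) (t : ℕ) : Tc d t + Fc d t = t := by
  induction t with
  | zero => simp [Tc, Fc]
  | succ t ih => rw [Tc_succ, Fc_succ]; cases d t <;> simp <;> omega

lemma Tc_mono (d : ℕ → Bool) {s t : ℕ} (h : s ≤ t) : Tc d s ≤ Tc d t :=
  Finset.card_le_card (Finset.filter_subset_filter _ (Finset.range_subset_range.2 h))

lemma Fc_mono (d : ℕ → Bool) {s t : ℕ} (h : s ≤ t) : Fc d s ≤ Fc d t :=
  Finset.card_le_card (Finset.filter_subset_filter _ (Finset.range_subset_range.2 h))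

section
variable (d : ℕ → Bool) (hd : ∀ k, d (2*k+1) = d (2*k))

include hd in
lemma Tc_Fc_even (k : ℕ) : Tc d (2*k) % 2 = 0 ∧ Fc d (2*k) % 2 = 0 := by
  induction k with
  | zero => simp [Tc, Fc]
  | succ k ih =>
    have e : 2*(k+1) = (2*k+1)+1 := by ring
    rw [e, Tc_succ, Fc_succ, Tc_succ, Fc_succ, hd k]
    cases d (2*k) <;> simp <;> omega

include hd in
lemma Tc_parity (m : ℕ) (h : d m = true) : Tc d (m+1) % 2 = (m+1) % 2 := by
  rcases Nat.even_or_odd m with he | ho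
  · obtain ⟨k, hk⟩ := he
    have hk' : m = 2*k := by omega
    subst hk'
    rw [Tc_succ, h]
    have := (Tc_Fc_even d hd k).1
    norm_num
    omega
  · obtain ⟨k, hk⟩ := ho
    subst hk
    rw [Tc_succ, h]
    have h0 : d (2*k) = true := by rw [← hd k]; exact h
    rw [Tc_succ, h0]
    have := (Tc_Fc_even d hd k).1
    simp
    omega

include hd in
lemma Fc_parity (m : ℕ) (h : d m = false) : Fc d (m+1) % 2 = (m+1) % 2 := by
  rcases Nat.even_or_odd m with he | ho
  · obtain ⟨k, hk⟩ := he
    have hk' : m = 2*k := by omega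
    subst hk'
    rw [Fc_succ, h]
    have := (Tc_Fc_even d hd k).2
    norm_num
    omega
  · obtain ⟨k, hk⟩ := ho
    subst hk
    rw [Fc_succ, h]
    have h0 : d (2*k) = false := by rw [← hd k]; exact h
    rw [Fc_succ, h0]
    have := (Tc_Fc_even d hd k).2
    simp
    omega
end

lemma hd_followBob (τ : List Bool → Bool) (k : ℕ) :
    choice followBob τ (2*k+1) = choice followBob τ (2*k) := by
  have h1 : ¬ Even (2*k+1) := by simp [Nat.even_add_one]
  have h2 : Even (2*k) := even_two_mul k
  unfold choice
  rw [if_neg h1, if_pos h2]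
  show (hist followBob τ (2*k+1)).getLastD true = _
  show ((hist followBob τ (2*k)) ++
      [if Even (2*k) then τ (hist followBob τ (2*k)) else _]).getLastD true = _
  rw [if_pos h2]
  exact List.getLastD_concat

lemma image_eq_filter (n : ℕ) [NeZero n] (C : ZMod n) (f : ℕ → ZMod n)
    (Q : ℕ → Prop) [DecidablePred Q]
    (hinj : ∀ t1 < n, ∀ t2 < n, f t1 = f t2 → t1 = t2)
    (hpar : ∀ t < n, (Q ((f t - C).val) ↔ Q t)) :
    ∀ i : ZMod n, i ∈ ((Finset.range n).filter fun t => Q t).image f ↔ Q ((i - C).val) := by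
  have hval_inj : ∀ i j : ZMod n, (i - C).val = (j - C).val → i = j := by
    intro i j h
    have h2 : i - C = j - C := by
      have := congrArg (fun m : ℕ => (m : ZMod n)) h
      simpa [ZMod.natCast_val, ZMod.cast_id] using this
    have := congrArg (· + C) h2
    simpa using this
  set A := ((Finset.range n).filter fun t => Q t).image f with hA
  set R := Finset.univ.filter fun i : ZMod n => Q ((i - C).val) with hR
  have hsub : A ⊆ R := by
    intro i hi
    simp only [hA, Finset.mem_image, Finset.mem_filter, Finset.mem_range] at hi
    obtain ⟨t, ⟨ht, hQ⟩, rfl⟩ := hi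
    simp only [hR, Finset.mem_filter, Finset.mem_univ, true_and]
    exact (hpar t ht).2 hQ
  have hcardA : A.card = ((Finset.range n).filter fun t => Q t).card :=
    Finset.card_image_of_injOn (fun t1 h1 t2 h2 h =>
      hinj t1 (Finset.mem_range.1 (Finset.mem_filter.1 h1).1)
        t2 (Finset.mem_range.1 (Finset.mem_filter.1 h2).1) h)
  have hcardR : R.card = ((Finset.range n).filter fun t => Q t).card := by
    apply Finset.card_bij (fun i _ => (i - C).val)
    · intro a ha
      simp only [hR, Finset.mem_filter, Finset.mem_univ, true_and] at ha
      simp only [Finset.mem_filter, Finset.mem_range]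
      exact ⟨ZMod.val_lt _, ha⟩
    · intro a _ b _ h; exact hval_inj a b h
    · intro b hb
      simp only [Finset.mem_filter, Finset.mem_range] at hb
      have hv : (C + (b : ZMod n) - C).val = b := by
        rw [add_sub_cancel_left, ZMod.val_cast_of_lt hb.1]
      refine ⟨C + b, ?_, hv⟩
      simp only [hR, Finset.mem_filter, Finset.mem_univ, true_and, hv]
      exact hb.2
  have hAR : A = R := Finset.eq_of_subset_of_card_le hsub (le_of_eq (hcardR.trans hcardA.symm))
  intro i
  rw [hAR]
  simp [hR]

theorem main_aux (n : ℕ) [NeZero n] (hn : Odd n) (p : ZMod n) (d : ℕ → Bool)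
    (hd : ∀ k, d (2*k+1) = d (2*k)) :
    ∃ C : ZMod n, Even ((p - C).val) ∧
      (∀ i : ZMod n,
        (i ∈ ((Finset.range n).filter fun t => Even t).image (piece n p d) ↔
          Even ((i - C).val))) ∧
      (∀ i : ZMod n,
        (i ∈ ((Finset.range n).filter fun t => ¬ Even t).image (piece n p d) ↔
          ¬ Even ((i - C).val))) := by
  have hn0 : 0 < n := Nat.pos_of_ne_zero (NeZero.ne n)
  set F := Fc d (n-1) with hF
  set T := Tc d (n-1) with hT
  have hTF : T + F = n - 1 := Tc_add_Fc d (n-1)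
  have hFeven : F % 2 = 0 := by
    obtain ⟨k, hk⟩ := hn
    have h1 : n - 1 = 2*k := by omega
    rw [hF, h1]
    exact (Tc_Fc_even d hd k).2
  set C : ZMod n := p - (F : ZMod n) with hC
  have hv0 : (p - C).val = F := by
    rw [hC, sub_sub_cancel, ZMod.val_cast_of_lt (by omega)]
  have hp0 : piece n p d 0 = p := rfl
  have hvT : ∀ m, m + 1 < n → d m = true →
      (piece n p d (m+1) - C).val = Tc d (m+1) + F := by
    intro m hm h
    have hle : Tc d (m+1) ≤ T := Tc_mono d (by omega)
    have he : piece n p d (m+1) - C = ((Tc d (m+1) + F : ℕ) : ZMod n) := by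
      show (if d m then p + _ else p - _) - (p - (F : ZMod n)) = _
      rw [if_pos h]
      show p + (Tc d (m+1) : ZMod n) - (p - (F : ZMod n)) = _
      push_cast
      ring
    rw [he, ZMod.val_cast_of_lt (by omega)]
  have hvF : ∀ m, m + 1 < n → d m = false →
      (piece n p d (m+1) - C).val = F - Fc d (m+1) := by
    intro m hm h
    have hle : Fc d (m+1) ≤ F := Fc_mono d (by omega)
    have he : piece n p d (m+1) - C = ((F - Fc d (m+1) : ℕ) : ZMod n) := by
      show (if d m then p + _ else p - _) - (p - (F : ZMod n)) = _
      rw [if_neg (by simp [h])]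
      show p - (Fc d (m+1) : ZMod n) - (p - (F : ZMod n)) = _
      rw [Nat.cast_sub hle]
      ring
    rw [he, ZMod.val_cast_of_lt (by omega)]
  have hpar : ∀ t < n, (piece n p d t - C).val % 2 = t % 2 := by
    intro t ht
    rcases t with _ | m
    · rw [hp0, hv0]; omega
    · cases h : d m
      · rw [hvF m ht h]
        have h1 := Fc_parity d hd m h
        have h2 : Fc d (m+1) ≤ F := Fc_mono d (by omega)
        omega
      · rw [hvT m ht h]
        have h1 := Tc_parity d hd m h
        omega
  have hTpos : ∀ m, d m = true → 1 ≤ Tc d (m+1) := by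
    intro m h; rw [Tc_succ, h]; simp
  have hFpos : ∀ m, d m = false → 1 ≤ Fc d (m+1) := by
    intro m h; rw [Fc_succ, h]; simp
  have keyT : ∀ m1 m2, m1 < m2 → d m2 = true → Tc d (m1+1) < Tc d (m2+1) := by
    intro m1 m2 hlt h2
    have h3 : Tc d (m1+1) ≤ Tc d m2 := Tc_mono d (by omega)
    have h4 := Tc_succ d m2
    rw [h2] at h4
    simp at h4
    omega
  have keyF : ∀ m1 m2, m1 < m2 → d m2 = false → Fc d (m1+1) < Fc d (m2+1) := by
    intro m1 m2 hlt h2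
    have h3 : Fc d (m1+1) ≤ Fc d m2 := Fc_mono d (by omega)
    have h4 := Fc_succ d m2
    rw [h2] at h4
    simp at h4
    omega
  have hinj : ∀ t1 < n, ∀ t2 < n, piece n p d t1 = piece n p d t2 → t1 = t2 := by
    intro t1 h1 t2 h2 heq
    have hv : (piece n p d t1 - C).val = (piece n p d t2 - C).val := by rw [heq]
    rcases t1 with _ | m1 <;> rcases t2 with _ | m2
    · rfl
    · exfalso
      rw [hp0, hv0] at hv
      cases h : d m2
      · rw [hvF m2 h2 h] at hv
        have := hFpos m2 h
        have : Fc d (m2+1) ≤ F := Fc_mono d (by omega)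
        omega
      · rw [hvT m2 h2 h] at hv
        have := hTpos m2 h
        omega
    · exfalso
      rw [hp0, hv0] at hv
      cases h : d m1
      · rw [hvF m1 h1 h] at hv
        have := hFpos m1 h
        have : Fc d (m1+1) ≤ F := Fc_mono d (by omega)
        omega
      · rw [hvT m1 h1 h] at hv
        have := hTpos m1 h
        omega
    · cases hA : d m1 <;> cases hB : d m2
      · -- both false
        rw [hvF m1 h1 hA, hvF m2 h2 hB] at hv
        have l1 : Fc d (m1+1) ≤ F := Fc_mono d (by omega)
        have l2 : Fc d (m2+1) ≤ F := Fc_mono d (by omega)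
        rcases Nat.lt_trichotomy m1 m2 with hlt | heqq | hgt
        · exact absurd (keyF m1 m2 hlt hB) (by omega)
        · rw [heqq]
        · exact absurd (keyF m2 m1 hgt hA) (by omega)
      · -- false, true
        exfalso
        rw [hvF m1 h1 hA, hvT m2 h2 hB] at hv
        have := hTpos m2 hB
        omega
      · -- true, false
        exfalso
        rw [hvT m1 h1 hA, hvF m2 h2 hB] at hv
        have := hTpos m1 hA
        omega
      · -- both true
        rw [hvT m1 h1 hA, hvT m2 h2 hB] at hv
        rcases Nat.lt_trichotomy m1 m2 with hlt | heqq | hgt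
        · exact absurd (keyT m1 m2 hlt hB) (by omega)
        · rw [heqq]
        · exact absurd (keyT m2 m1 hgt hA) (by omega)
  refine ⟨C, ?_, ?_, ?_⟩
  · rw [hv0]
    exact Nat.even_iff.2 hFeven
  · exact image_eq_filter n C (piece n p d) (fun t => Even t) hinj
      (fun t ht => by simp [Nat.even_iff, hpar t ht])
  · exact image_eq_filter n C (piece n p d) (fun t => ¬ Even t) hinj
      (fun t ht => by simp [Nat.even_iff, hpar t ht])

end Stmt7Aux

/-- If Alice plays follow-Bob on an odd pizza, starting at piece `p`, then at
the end of the game there is a cut `C` with `p ∈ R(C)` such that Alice's eaten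
pieces are exactly `R(C)` and Bob's are exactly `G(C)`, where `(R(C), G(C))` is
the almost alternating coloring induced by `C` (piece `i` is red iff
`(i - C).val` is even). -/
theorem stmt7 (n : ℕ) [NeZero n] (hn : Odd n) (p : ZMod n) (τ : List Bool → Bool) :
    ∃ C : ZMod n, Even ((p - C).val) ∧
      (∀ i : ZMod n,
        (i ∈ ((Finset.range n).filter fun t => Even t).image
            (piece n p (choice followBob τ)) ↔ Even ((i - C).val))) ∧
      (∀ i : ZMod n,
        (i ∈ ((Finset.range n).filter fun t => ¬ Even t).image
            (piece n p (choice followBob τ)) ↔ ¬ Even ((i - C).val))) :=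
  Stmt7Aux.main_aux n hn p (choice followBob τ) (Stmt7Aux.hd_followBob τ)
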